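/- Consider the scalar ODE ρ'(t) = −c₀·ρ(t)^{n/(n+1)}·cos γ(t) with c₀ > 0, n ∈ ℕ, ρ(0) = ρ₀ > 0, and suppose cos γ(t) ≥ 1/√(1 + C²) for all t in the interval of existence, for some constant C ≥ 0. Then with t₁ = (n+1)·(ρ₀^{1/(n+1)}/c₀)·√(1 + C²), we have ρ(t) ≤ ρ₀·(1 − t/t₁)^{n+1} for all t in the interval of existence intersected with [0, t₁). -/

import Mathlib

open Set Real

theorem stmt15 (c₀ ρ₀ C T : ℝ) (n : ℕ) (hc₀ : 0 < c₀) (hρ₀ : 0 < ρ₀) (hC : 0 ≤ C)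
    (hT : 0 < T)
    (ρ γ : ℝ → ℝ)
    (hρpos : ∀ t ∈ Ico 0 T, 0 < ρ t)
    (hρ0 : ρ 0 = ρ₀)
    (hode : ∀ t ∈ Ico 0 T,
      HasDerivAt ρ (-c₀ * ρ t ^ ((n : ℝ) / (n + 1)) * Real.cos (γ t)) t)
    (hcos : ∀ t ∈ Ico 0 T, 1 / Real.sqrt (1 + C ^ 2) ≤ Real.cos (γ t)) :
    ∀ t ∈ Ico 0 T,
      t < (n + 1) * (ρ₀ ^ ((1 : ℝ) / (n + 1)) / c₀) * Real.sqrt (1 + C ^ 2) →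
      ρ t ≤ ρ₀ * (1 - t / ((n + 1) * (ρ₀ ^ ((1 : ℝ) / (n + 1)) / c₀) *
        Real.sqrt (1 + C ^ 2))) ^ (n + 1) := by
  intro t ht htlt
  obtain ⟨ht0, htT⟩ := ht
  have hn1 : (0:ℝ) < (n:ℝ) + 1 := by positivity
  set A := Real.sqrt (1 + C^2) with hA
  have hApos : 0 < A := Real.sqrt_pos.mpr (by positivity)
  set B := ρ₀ ^ ((1:ℝ)/((n:ℝ)+1)) with hB
  have hBpos : 0 < B := Real.rpow_pos_of_pos hρ₀ _
  set t₁ := ((n:ℝ) + 1) * (B / c₀) * A with ht₁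
  have ht₁pos : 0 < t₁ := by positivity
  set k := c₀ / (((n:ℝ)+1) * A) with hk
  have hkpos : 0 < k := by positivity
  set u := fun s => ρ s ^ ((1:ℝ)/((n:ℝ)+1)) with hu
  have hud : ∀ s ∈ Ico (0:ℝ) T,
      HasDerivAt u (-(c₀/((n:ℝ)+1)) * Real.cos (γ s)) s := by
    intro s hs
    have hρs := hρpos s hs
    have h := (hode s hs).rpow_const (p := (1:ℝ)/((n:ℝ)+1)) (Or.inl (ne_of_gt hρs))
    convert h using 1
    have hexp : (n:ℝ)/((n:ℝ)+1) + ((1:ℝ)/((n:ℝ)+1) - 1) = 0 := by field_simp; ring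
    have hmul : ρ s ^ ((n:ℝ)/((n:ℝ)+1)) * ρ s ^ ((1:ℝ)/((n:ℝ)+1) - 1) = 1 := by
      rw [← Real.rpow_add hρs, hexp, Real.rpow_zero]
    rw [show (-c₀ * ρ s ^ ((n:ℝ)/((n:ℝ)+1)) * Real.cos (γ s)) * ((1:ℝ)/((n:ℝ)+1)) *
        ρ s ^ ((1:ℝ)/((n:ℝ)+1) - 1) =
        (ρ s ^ ((n:ℝ)/((n:ℝ)+1)) * ρ s ^ ((1:ℝ)/((n:ℝ)+1) - 1)) *
        (-(c₀/((n:ℝ)+1)) * Real.cos (γ s)) from by ring, hmul, one_mul]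
  set g := fun s => u s + k * s with hg
  have hsub : Icc (0:ℝ) t ⊆ Ico 0 T := fun s hs => ⟨hs.1, lt_of_le_of_lt hs.2 htT⟩
  have hgd : ∀ s ∈ Ico (0:ℝ) T,
      HasDerivAt g (-(c₀/((n:ℝ)+1)) * Real.cos (γ s) + k) s := by
    intro s hs
    have := (hud s hs).add ((hasDerivAt_id s).const_mul k)
    rw [mul_one] at this
    exact this
  have hanti : AntitoneOn g (Icc 0 t) := by
    apply antitoneOn_of_deriv_nonpos (convex_Icc 0 t)
    · intro s hs
      exact (hgd s (hsub hs)).continuousAt.continuousWithinAt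
    · intro s hs
      rw [interior_Icc] at hs
      exact (hgd s (hsub ⟨le_of_lt hs.1, le_of_lt hs.2⟩)).differentiableAt.differentiableWithinAt
    · intro s hs
      rw [interior_Icc] at hs
      have hs' : s ∈ Ico (0:ℝ) T := hsub ⟨le_of_lt hs.1, le_of_lt hs.2⟩
      rw [(hgd s hs').deriv]
      have hc := hcos s hs'
      have hcd : c₀/((n:ℝ)+1) * (1/A) ≤ c₀/((n:ℝ)+1) * Real.cos (γ s) := by
        apply mul_le_mul_of_nonneg_left hc (by positivity)
      have hkek : k = c₀/((n:ℝ)+1) * (1/A) := by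
        rw [hk]; field_simp
      nlinarith [hcd, hkek]
  have hgt : g t ≤ g 0 := hanti ⟨le_rfl, ht0⟩ ⟨ht0, le_rfl⟩ ht0
  have hg0 : g 0 = B := by simp [hg, hu, hρ0, hB]
  have hut : u t ≤ B - k * t := by
    have : u t + k * t ≤ B := by rw [← hg0]; exact hgt
    linarith
  have hkt₁ : k * t₁ = B := by
    rw [hk, ht₁]; field_simp
  have hkey : u t ≤ B * (1 - t / t₁) := by
    have : B - k * t = B * (1 - t / t₁) := by
      rw [mul_sub, mul_one, mul_div_assoc']
      congr 1
      rw [← hkt₁]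
      field_simp
    linarith [hut, this.ge]
  have hρt := hρpos t ⟨ht0, htT⟩
  have hunn : 0 ≤ u t := Real.rpow_nonneg (le_of_lt hρt) _
  have hfrac : 0 ≤ 1 - t / t₁ := by
    have : t / t₁ < 1 := (div_lt_one ht₁pos).mpr htlt
    linarith
  have hpow := pow_le_pow_left₀ hunn hkey (n+1)
  have hul : u t ^ (n+1) = ρ t := by
    rw [hu]
    rw [← Real.rpow_natCast (ρ t ^ ((1:ℝ)/((n:ℝ)+1))) (n+1),
        ← Real.rpow_mul (le_of_lt hρt)]
    push_cast
    rw [show (1:ℝ)/((n:ℝ)+1) * ((n:ℝ)+1) = 1 from by field_simp, Real.rpow_one]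
  have hBl : B ^ (n+1) = ρ₀ := by
    rw [hB, ← Real.rpow_natCast (ρ₀ ^ ((1:ℝ)/((n:ℝ)+1))) (n+1),
        ← Real.rpow_mul (le_of_lt hρ₀)]
    push_cast
    rw [show (1:ℝ)/((n:ℝ)+1) * ((n:ℝ)+1) = 1 from by field_simp, Real.rpow_one]
  calc ρ t = u t ^ (n+1) := hul.symm
    _ ≤ (B * (1 - t / t₁)) ^ (n+1) := hpow
    _ = ρ₀ * (1 - t / t₁) ^ (n+1) := by rw [mul_pow, hBl]
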